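/- arXiv:2312.05938 — 3 statements merged into one kernel-verified Lean document; each statement's English description precedes it below -/
import Mathlib

section
/- Let s ≥ 1 be an integer and let k be a squarefree positive integer. Then for every positive integer n, μ(k)·c_k^{(s)}(n) = Σ_{d : d | k and d^s | n} d^s·μ(d), i.e., the sum of d^s·μ(d) over all positive integers d with d^s dividing the generalized gcd (k^s, n)_s. -/
open scoped BigOperators
open ArithmeticFunction
open scoped ArithmeticFunction.Moebius

/-- Generalized gcd `(a,b)_s`: the largest `d ^ s` (with `d` a positive integer)
dividing both `a` and `b`. -/
def ggcd (s a b : ℕ) : ℕ :=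
  (Nat.findGreatest (fun d => d ^ s ∣ a ∧ d ^ s ∣ b) (max a b)) ^ s

/-- The Cohen–Ramanujan sum `c_k^{(s)}(n) = Σ_{h=1, (h,k^s)_s=1}^{k^s} e^{2πinh/k^s}`. -/
noncomputable def CRS (s k n : ℕ) : ℂ :=
  ∑ h ∈ Finset.Icc 1 (k ^ s),
    if ggcd s h (k ^ s) = 1 then
      Complex.exp (2 * Real.pi * Complex.I * n * h / (k ^ s))
    else 0

/-- The core of `k`: its largest squarefree divisor. -/
def core (k : ℕ) : ℕ := ∏ p ∈ k.primeFactors, p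

/-- `k* = k / k̄`. -/
def spart (k : ℕ) : ℕ := k / core k

/-- `ξ_d(k) = d` if `d ∣ k`, and `0` otherwise. -/
def xi (d k : ℕ) : ℕ := if d ∣ k then d else 0

/-- Klee's function `Φ_s(n) = n ∏_{p prime, p^s ∣ n} (1 - 1/p^s)`. -/
noncomputable def Klee (s n : ℕ) : ℂ :=
  n * ∏ p ∈ n.primeFactors.filter (fun p => p ^ s ∣ n), (1 - 1 / (p : ℂ) ^ s)

/-- The Jordan totient function `J_s(n) = n^s ∏_{p ∣ n} (1 - 1/p^s)` (as a complex number). -/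
noncomputable def Jordan (s n : ℕ) : ℂ :=
  (n : ℂ) ^ s * ∏ p ∈ n.primeFactors, (1 - 1 / (p : ℂ) ^ s)

-- auxiliary lemmas
-- geometric sum lemma
lemma sum_exp_Icc (M n : ℕ) (hM : 0 < M) :
    ∑ j ∈ Finset.Icc 1 M, Complex.exp (2 * Real.pi * Complex.I * n * j / M) =
      if M ∣ n then (M : ℂ) else 0 := by
  have hM0 : (M : ℂ) ≠ 0 := Nat.cast_ne_zero.mpr hM.ne'
  set z : ℂ := Complex.exp (2 * Real.pi * Complex.I * n / M) with hz
  have hterm : ∀ j : ℕ, Complex.exp (2 * Real.pi * Complex.I * n * j / M) = z ^ j := by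
    intro j
    rw [hz, ← Complex.exp_nat_mul]
    ring_nf
  have hzM : z ^ M = 1 := by
    rw [hz, ← Complex.exp_nat_mul]
    have : (M : ℂ) * (2 * Real.pi * Complex.I * n / M) = n * (2 * Real.pi * Complex.I) := by
      field_simp
    rw [this]
    simpa using Complex.exp_int_mul_two_pi_mul_I (n : ℤ)
  simp only [hterm]
  by_cases hdvd : M ∣ n
  · obtain ⟨c, rfl⟩ := hdvd
    have hz1 : z = 1 := by
      rw [hz]
      have : 2 * Real.pi * Complex.I * (M * c : ℕ) / M = (c : ℤ) * (2 * Real.pi * Complex.I) := by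
        push_cast; field_simp
      rw [this]
      exact Complex.exp_int_mul_two_pi_mul_I c
    simp [hz1, Nat.card_Icc]
  · have hz1 : z ≠ 1 := by
      intro h1
      rw [hz, Complex.exp_eq_one_iff] at h1
      obtain ⟨c, hc⟩ := h1
      have h2 : (n : ℂ) = c * M := by
        have hpi : (2:ℂ) * Real.pi * Complex.I ≠ 0 := by
          simp [Real.pi_ne_zero, Complex.I_ne_zero]
        field_simp at hc
        exact mul_left_cancel₀ hpi (show (2 * (Real.pi:ℂ) * Complex.I) * (n:ℂ) =
          (2 * (Real.pi:ℂ) * Complex.I) * ((c:ℂ) * M) by linear_combination (2 * (Real.pi:ℂ) * Complex.I) * hc)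
      have h3 : (n : ℤ) = c * M := by exact_mod_cast h2
      exact hdvd (Int.natCast_dvd_natCast.mp ⟨c, by rw [h3, mul_comm]⟩)
    rw [if_neg hdvd]
    have hins : Finset.range (M + 1) = insert 0 (Finset.Icc 1 M) := by
      ext x; simp [Finset.mem_range, Finset.mem_Icc]; omega
    have hgeom := geom_sum_eq hz1 (M + 1)
    rw [hins, Finset.sum_insert (by simp), pow_succ, hzM, one_mul,
      div_self (sub_ne_zero.mpr hz1), pow_zero] at hgeom
    linear_combination hgeom

lemma prod_pow_dvd (s h : ℕ) (t : Finset ℕ) :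
    (∀ p ∈ t, Nat.Prime p) → (∀ p ∈ t, p ^ s ∣ h) → (∏ p ∈ t, p) ^ s ∣ h := by
  classical
  induction t using Finset.induction_on with
  | empty => intro _ _; simpa using one_dvd h
  | @insert a t' ha ih =>
    intro hp hd
    rw [Finset.prod_insert ha, mul_pow]
    have hcop : Nat.Coprime (a ^ s) ((∏ p ∈ t', p) ^ s) := by
      apply Nat.Coprime.pow
      refine Nat.Coprime.prod_right fun p hpmem => ?_
      exact (Nat.coprime_primes (hp a (Finset.mem_insert_self a t'))
        (hp p (Finset.mem_insert_of_mem hpmem))).mpr (fun he => ha (he ▸ hpmem))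
    exact hcop.mul_dvd_of_dvd_of_dvd (hd a (Finset.mem_insert_self a t'))
      (ih (fun p hp' => hp p (Finset.mem_insert_of_mem hp'))
          (fun p hp' => hd p (Finset.mem_insert_of_mem hp')))

lemma ind_eq (s : ℕ) (hs : 1 ≤ s) (k : ℕ) (hk : 0 < k) (hksf : Squarefree k)
    (h : ℕ) (hh : 1 ≤ h) :
    (if ggcd s h (k ^ s) = 1 then (1 : ℤ) else 0) =
      ∑ d ∈ k.divisors.filter (fun d => d ^ s ∣ h), μ d := by
  classical
  set T := k.primeFactors.filter (fun p => p ^ s ∣ h) with hT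
  set m := ∏ p ∈ T, p with hm
  have hTprime : ∀ p ∈ T, Nat.Prime p := fun p hp =>
    Nat.prime_of_mem_primeFactors (Finset.mem_filter.mp hp).1
  have hm_dvd_k : m ∣ k := by
    have : ∏ p ∈ T, p ∣ ∏ p ∈ k.primeFactors, p :=
      Finset.prod_dvd_prod_of_subset _ _ _ (Finset.filter_subset _ _)
    rwa [Nat.prod_primeFactors_of_squarefree hksf] at this
  have hm_pos : 0 < m := Finset.prod_pos (fun p hp => (hTprime p hp).pos)
  have key : ∀ d, d ∣ k → (d ^ s ∣ h ↔ d ∣ m) := by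
    intro d hdk
    have hdsf : Squarefree d := hksf.squarefree_of_dvd hdk
    constructor
    · intro hdh
      have hd' : d = ∏ p ∈ d.primeFactors, p :=
        (Nat.prod_primeFactors_of_squarefree hdsf).symm
      rw [hd']
      apply Finset.prod_dvd_prod_of_subset
      intro p hp
      have hpp : p.Prime := Nat.prime_of_mem_primeFactors hp
      have hpd : p ∣ d := Nat.dvd_of_mem_primeFactors hp
      refine Finset.mem_filter.mpr ⟨Nat.mem_primeFactors.mpr ⟨hpp, hpd.trans hdk, hk.ne'⟩, ?_⟩
      exact dvd_trans (pow_dvd_pow_of_dvd hpd s) hdh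
    · intro hdm
      exact (pow_dvd_pow_of_dvd hdm s).trans
        (prod_pow_dvd s h T hTprime (fun p hp => (Finset.mem_filter.mp hp).2))
  have hset : k.divisors.filter (fun d => d ^ s ∣ h) = m.divisors := by
    ext d
    simp only [Finset.mem_filter, Nat.mem_divisors]
    constructor
    · rintro ⟨⟨hdk, -⟩, hdh⟩; exact ⟨(key d hdk).mp hdh, hm_pos.ne'⟩
    · rintro ⟨hdm, -⟩
      have hdk : d ∣ k := hdm.trans hm_dvd_k
      exact ⟨⟨hdk, hk.ne'⟩, (key d hdk).mpr hdm⟩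
  rw [hset]
  have hsum : ∑ d ∈ m.divisors, μ d = if m = 1 then 1 else 0 := by
    have h1 : (μ * ArithmeticFunction.zeta : ArithmeticFunction ℤ) m = (1 : ArithmeticFunction ℤ) m := by
      rw [ArithmeticFunction.moebius_mul_coe_zeta]
    rwa [ArithmeticFunction.coe_mul_zeta_apply, ArithmeticFunction.one_apply] at h1
  rw [hsum]
  have iff1 : ggcd s h (k ^ s) = 1 ↔ m = 1 := by
    unfold ggcd
    constructor
    · intro hg
      have hg1 : Nat.findGreatest (fun d => d ^ s ∣ h ∧ d ^ s ∣ k ^ s) (max h (k ^ s)) = 1 := by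
        exact (pow_eq_one_iff.mp hg).resolve_right (show s ≠ 0 by omega)
      by_contra hm1
      have hTne : T.Nonempty := by
        rw [Finset.nonempty_iff_ne_empty]
        intro hemp
        apply hm1
        rw [hm, hemp, Finset.prod_empty]
      obtain ⟨p, hp⟩ := hTne
      have hpp := hTprime p hp
      have hpk : p ∣ k := Nat.dvd_of_mem_primeFactors (Finset.mem_filter.mp hp).1
      have hph : p ^ s ∣ h := (Finset.mem_filter.mp hp).2
      have hpN : p ≤ max h (k ^ s) :=
        le_max_of_le_left (le_trans (Nat.le_self_pow (by omega) p) (Nat.le_of_dvd hh hph))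
      have hle := Nat.le_findGreatest (P := fun d => d ^ s ∣ h ∧ d ^ s ∣ k ^ s) hpN ⟨hph, pow_dvd_pow_of_dvd hpk s⟩
      have := hpp.two_le
      omega
    · intro hm1
      have hg : Nat.findGreatest (fun d => d ^ s ∣ h ∧ d ^ s ∣ k ^ s) (max h (k ^ s)) = 1 := by
        rw [Nat.findGreatest_eq_iff]
        refine ⟨le_max_of_le_left hh, fun _ => ⟨by simpa using one_dvd h,
          by simpa using one_dvd (k ^ s)⟩, ?_⟩
        rintro d hd1 hdN ⟨hdh, hdkk⟩
        have hdk' : d ∣ k := (Nat.pow_dvd_pow_iff (by omega)).mp hdkk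
        have hdne : d ≠ 1 := by omega
        have hpp : d.minFac.Prime := Nat.minFac_prime hdne
        have hpT : d.minFac ∈ T := Finset.mem_filter.mpr
          ⟨Nat.mem_primeFactors.mpr ⟨hpp, (Nat.minFac_dvd d).trans hdk', hk.ne'⟩,
            dvd_trans (pow_dvd_pow_of_dvd (Nat.minFac_dvd d) s) hdh⟩
        have hdvd : d.minFac ∣ m := Finset.dvd_prod_of_mem _ hpT
        rw [hm1] at hdvd
        exact hpp.one_lt.ne' (Nat.dvd_one.mp hdvd)
      rw [hg, one_pow]
  simp [iff1]

set_option maxHeartbeats 1000000 in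
/-- For squarefree `k`, `μ(k)·c_k^{(s)}(n) = Σ_{d ∣ k, d^s ∣ n} d^s·μ(d)`. -/
theorem moebius_CRS_eq_sum (s : ℕ) (hs : 1 ≤ s) (k : ℕ) (hk : 0 < k)
    (hksf : Squarefree k) (n : ℕ) (hn : 0 < n) :
    (μ k : ℂ) * CRS s k n =
      ∑ d ∈ k.divisors.filter (fun d => d ^ s ∣ n), (d : ℂ) ^ s * (μ d : ℂ) := by
  classical
  have hK : 0 < k ^ s := pow_pos hk s
  set E : ℕ → ℂ := fun h => Complex.exp (2 * Real.pi * Complex.I * n * h / ((k : ℂ) ^ s))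
    with hE
  have step1 : CRS s k n = ∑ d ∈ k.divisors, (μ d : ℂ) *
      ∑ h ∈ (Finset.Icc 1 (k ^ s)).filter (fun h => d ^ s ∣ h), E h := by
    unfold CRS
    have e1 : ∀ h ∈ Finset.Icc 1 (k ^ s),
        (if ggcd s h (k ^ s) = 1 then E h else 0) =
        ∑ d ∈ k.divisors.filter (fun d => d ^ s ∣ h), (μ d : ℂ) * E h := by
      intro h hmem
      have h1 : 1 ≤ h := (Finset.mem_Icc.mp hmem).1
      have := ind_eq s hs k hk hksf h h1
      calc (if ggcd s h (k ^ s) = 1 then E h else 0)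
          = ((if ggcd s h (k ^ s) = 1 then (1 : ℤ) else 0 : ℤ) : ℂ) * E h := by
            split_ifs <;> simp
        _ = ((∑ d ∈ k.divisors.filter (fun d => d ^ s ∣ h), μ d : ℤ) : ℂ) * E h := by
            rw [this]
        _ = ∑ d ∈ k.divisors.filter (fun d => d ^ s ∣ h), (μ d : ℂ) * E h := by
            push_cast
            rw [Finset.sum_mul]
    rw [Finset.sum_congr rfl e1]
    simp only [Finset.sum_filter]
    rw [Finset.sum_comm]
    refine Finset.sum_congr rfl fun d _ => ?_
    rw [Finset.mul_sum]
    refine Finset.sum_congr rfl fun h _ => ?_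
    split_ifs <;> simp
  have step2 : ∀ d ∈ k.divisors,
      ∑ h ∈ (Finset.Icc 1 (k ^ s)).filter (fun h => d ^ s ∣ h), E h
        = if (k / d) ^ s ∣ n then (((k / d : ℕ) : ℂ)) ^ s else 0 := by
    intro d hd
    obtain ⟨hdk, -⟩ := Nat.mem_divisors.mp hd
    have hd0 : 0 < d := Nat.pos_of_dvd_of_pos hdk hk
    set M := (k / d) ^ s with hM
    have hMpos : 0 < M := pow_pos (Nat.div_pos (Nat.le_of_dvd hk hdk) hd0) s
    have hkey : d ^ s * M = k ^ s := by
      rw [hM, ← mul_pow, Nat.mul_div_cancel' hdk]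
    have himg : (Finset.Icc 1 (k ^ s)).filter (fun h => d ^ s ∣ h)
        = (Finset.Icc 1 M).image (fun j => d ^ s * j) := by
      ext x
      simp only [Finset.mem_filter, Finset.mem_Icc, Finset.mem_image]
      constructor
      · rintro ⟨⟨hx1, hx2⟩, j, rfl⟩
        refine ⟨j, ⟨?_, ?_⟩, rfl⟩
        · rcases Nat.eq_zero_or_pos j with rfl | hj
          · simp at hx1
          · exact hj
        · rw [← hkey] at hx2
          exact Nat.le_of_mul_le_mul_left hx2 (pow_pos hd0 s)
      · rintro ⟨j, ⟨hj1, hj2⟩, rfl⟩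
        refine ⟨⟨?_, ?_⟩, ⟨j, rfl⟩⟩
        · exact Nat.one_le_iff_ne_zero.mpr (Nat.mul_ne_zero (pow_pos hd0 s).ne' (by omega))
        · rw [← hkey]
          exact Nat.mul_le_mul_left _ hj2
    rw [himg, Finset.sum_image
      (fun a _ b _ hab => Nat.eq_of_mul_eq_mul_left (pow_pos hd0 s) hab)]
    have hkeyC : ((k : ℂ)) ^ s = ((d : ℂ)) ^ s * (M : ℂ) := by
      have h' := congrArg (fun x : ℕ => (x : ℂ)) hkey
      push_cast at h'
      exact h'.symm
    have hterm : ∀ j ∈ Finset.Icc 1 M, E (d ^ s * j)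
        = Complex.exp (2 * Real.pi * Complex.I * n * j / (M : ℂ)) := by
      intro j _
      simp only [hE]
      refine congrArg Complex.exp ?_
      have hd0C : ((d : ℂ)) ^ s ≠ 0 := pow_ne_zero s (Nat.cast_ne_zero.mpr hd0.ne')
      have hM0C : (M : ℂ) ≠ 0 := Nat.cast_ne_zero.mpr hMpos.ne'
      rw [hkeyC, div_eq_div_iff (by exact mul_ne_zero hd0C hM0C) hM0C]
      push_cast
      ring
    rw [Finset.sum_congr rfl hterm, sum_exp_Icc M n hMpos, hM]
    norm_cast
  rw [step1, Finset.mul_sum]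
  have step3 : ∀ d ∈ k.divisors,
      (μ k : ℂ) * ((μ d : ℂ) *
        ∑ h ∈ (Finset.Icc 1 (k ^ s)).filter (fun h => d ^ s ∣ h), E h)
      = (fun e => (μ k : ℂ) * (μ (k / e) : ℂ) *
          (if e ^ s ∣ n then ((e : ℂ)) ^ s else 0)) (k / d) := by
    intro d hd
    obtain ⟨hdk, -⟩ := Nat.mem_divisors.mp hd
    rw [step2 d hd]
    dsimp only
    rw [Nat.div_div_self hdk hk.ne']
    push_cast
    ring
  rw [Finset.sum_congr rfl step3, Nat.sum_div_divisors k
    (fun e => (μ k : ℂ) * (μ (k / e) : ℂ) * (if e ^ s ∣ n then ((e : ℂ)) ^ s else 0))]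
  have step4 : ∀ d ∈ k.divisors,
      (μ k : ℂ) * (μ (k / d) : ℂ) * (if d ^ s ∣ n then ((d : ℂ)) ^ s else 0)
      = if d ^ s ∣ n then ((d : ℂ)) ^ s * (μ d : ℂ) else 0 := by
    intro d hd
    obtain ⟨hdk, -⟩ := Nat.mem_divisors.mp hd
    have hcop : Nat.Coprime d (k / d) := by
      have hmul : d * (k / d) = k := Nat.mul_div_cancel' hdk
      have := hksf
      rw [← hmul] at this
      exact (Nat.squarefree_mul_iff.mp this).1
    have hmuk : μ k = μ d * μ (k / d) := by
      conv_lhs => rw [← Nat.mul_div_cancel' hdk]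
      exact ArithmeticFunction.isMultiplicative_moebius.map_mul_of_coprime hcop
    have hsq : μ (k / d) ^ 2 = 1 :=
      ArithmeticFunction.moebius_sq_eq_one_of_squarefree
        (hksf.squarefree_of_dvd (Nat.div_dvd_of_dvd hdk))
    have hint : μ k * μ (k / d) = μ d := by
      rw [hmuk]
      calc μ d * μ (k / d) * μ (k / d) = μ d * (μ (k / d) ^ 2) := by ring
        _ = μ d := by rw [hsq, mul_one]
    have hC : (μ k : ℂ) * (μ (k / d) : ℂ) = (μ d : ℂ) := by exact_mod_cast hint
    rw [hC]
    split_ifs <;> ring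
  rw [Finset.sum_congr rfl step4, ← Finset.sum_filter]
end

section
/- Let s ≥ 1 be an integer and let k, n be positive integers. If (k*)^s does not divide n, where k* = k/k̄ and k̄ is the largest squarefree divisor of k, then c_k^{(s)}(n) = 0. -/
open scoped BigOperators
open ArithmeticFunction

lemma sum_exp_eq_zero (m n : ℕ) (hm : 0 < m) (h : ¬ m ∣ n) :
    ∑ t ∈ Finset.range m, Complex.exp (2 * Real.pi * Complex.I * n * t / m) = 0 := by
  set x : ℂ := Complex.exp (2 * Real.pi * Complex.I * n / m) with hxdef
  have hm' : (m : ℂ) ≠ 0 := Nat.cast_ne_zero.mpr hm.ne'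
  have hterm : ∀ t : ℕ, Complex.exp (2 * Real.pi * Complex.I * n * t / m) = x ^ t := by
    intro t
    rw [hxdef, ← Complex.exp_nat_mul]
    congr 1
    field_simp
  have hx1 : x ≠ 1 := by
    intro hx
    rw [hxdef, Complex.exp_eq_one_iff] at hx
    obtain ⟨j, hj⟩ := hx
    have h2 : (2 * Real.pi * Complex.I : ℂ) ≠ 0 := by
      simp [Real.pi_ne_zero, Complex.I_ne_zero]
    field_simp at hj
    have hc : (n : ℂ) = j * m := by linear_combination hj
    have hnm : (n : ℤ) = j * m := by exact_mod_cast hc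
    have : (m : ℤ) ∣ (n : ℤ) := ⟨j, by linarith⟩
    exact h (Int.natCast_dvd_natCast.mp this)
  have hxm : x ^ m = 1 := by
    rw [hxdef, ← Complex.exp_nat_mul, Complex.exp_eq_one_iff]
    refine ⟨n, ?_⟩
    field_simp
    push_cast; ring
  calc ∑ t ∈ Finset.range m, Complex.exp (2 * Real.pi * Complex.I * n * t / m)
      = ∑ t ∈ Finset.range m, x ^ t := by simp_rw [hterm]
    _ = (x ^ m - 1) / (x - 1) := geom_sum_eq hx1 m
    _ = 0 := by rw [hxm]; simp

lemma ggcd_eq_one_iff (s : ℕ) (hs : 1 ≤ s) (a k : ℕ) (ha : 1 ≤ a) (hk : 0 < k)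
    (hak : a ≤ k ^ s) :
    ggcd s a (k ^ s) = 1 ↔ ∀ p, p.Prime → p ∣ k → ¬ p ^ s ∣ a := by
  have hks : 1 ≤ k ^ s := Nat.one_le_pow _ _ hk
  have hmax : max a (k ^ s) = k ^ s := max_eq_right hak
  unfold ggcd
  rw [hmax]
  constructor
  · intro h1 p hp hpk hpa
    have hFG : Nat.findGreatest (fun d => d ^ s ∣ a ∧ d ^ s ∣ k ^ s) (k ^ s) = 1 :=
      (pow_eq_one_iff.mp h1).resolve_right (by omega)
    rw [Nat.findGreatest_eq_iff] at hFG
    have hple : p ≤ k ^ s := by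
      have h1p : p ≤ p ^ s := Nat.le_self_pow (by omega) p
      have h2p : p ^ s ≤ a := Nat.le_of_dvd (by omega) hpa
      omega
    exact hFG.2.2 hp.one_lt hple ⟨hpa, pow_dvd_pow_of_dvd hpk s⟩
  · intro h
    have : Nat.findGreatest (fun d => d ^ s ∣ a ∧ d ^ s ∣ k ^ s) (k ^ s) = 1 := by
      rw [Nat.findGreatest_eq_iff]
      refine ⟨hks, fun _ => ⟨by simp, by simp⟩, ?_⟩
      rintro d hd hdle ⟨hda, hdk⟩
      have hp := Nat.minFac_prime (by omega : d ≠ 1)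
      have hpk : d.minFac ∣ k := hp.dvd_of_dvd_pow
        (dvd_trans (dvd_trans (Nat.minFac_dvd d) (dvd_pow_self d (by omega))) hdk)
      exact h d.minFac hp hpk
        (dvd_trans (pow_dvd_pow_of_dvd (Nat.minFac_dvd d) s) hda)
    rw [this, one_pow]


/-- If `(k*)^s ∤ n` then `c_k^{(s)}(n) = 0`. -/
theorem CRS_eq_zero_of_not_dvd (s : ℕ) (hs : 1 ≤ s) (k n : ℕ) (hk : 0 < k) (hn : 0 < n)
    (h : ¬ (spart k) ^ s ∣ n) :
    CRS s k n = 0 := by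
  have hcore_dvd : core k ∣ k := Nat.prod_primeFactors_dvd k
  have hcore_pos : 0 < core k := Nat.pos_of_dvd_of_pos hcore_dvd hk
  have hmul : core k * spart k = k := Nat.mul_div_cancel' hcore_dvd
  have hspart_pos : 0 < spart k := Nat.div_pos (Nat.le_of_dvd hk hcore_dvd) hcore_pos
  obtain ⟨c, m, hc, hm⟩ : ∃ c m, c = (core k) ^ s ∧ m = (spart k) ^ s := ⟨_, _, rfl, rfl⟩
  rw [← hm] at h
  have hcm : c * m = k ^ s := by rw [hc, hm, ← mul_pow, hmul]
  have hc_pos : 0 < c := hc ▸ pow_pos hcore_pos s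
  have hm_pos : 0 < m := hm ▸ pow_pos hspart_pos s
  have hc' : (c : ℂ) ≠ 0 := Nat.cast_ne_zero.mpr hc_pos.ne'
  have hm' : (m : ℂ) ≠ 0 := Nat.cast_ne_zero.mpr hm_pos.ne'
  have hkc : ((k : ℂ)) ^ s = (c : ℂ) * (m : ℂ) := by exact_mod_cast hcm.symm
  have hpc : ∀ p : ℕ, p.Prime → p ∣ k → p ^ s ∣ c := fun p hp hpk =>
    hc ▸ pow_dvd_pow_of_dvd (Finset.dvd_prod_of_mem _
      (Nat.mem_primeFactors.mpr ⟨hp, hpk, hk.ne'⟩)) s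
  have step1 : CRS s k n = ∑ p ∈ Finset.range c ×ˢ Finset.range m,
      (if ggcd s (1 + p.1 + c * p.2) (k ^ s) = 1 then
        Complex.exp (2 * Real.pi * Complex.I * n * (1 + p.1 + c * p.2) / ((k : ℂ) ^ s))
      else 0) := by
    unfold CRS
    refine Finset.sum_nbij' (fun a => ((a - 1) % c, (a - 1) / c))
      (fun p => 1 + p.1 + c * p.2) ?_ ?_ ?_ ?_ ?_
    · intro a ha
      rw [Finset.mem_Icc] at ha
      rw [Finset.mem_product, Finset.mem_range, Finset.mem_range]
      refine ⟨Nat.mod_lt _ hc_pos, Nat.div_lt_of_lt_mul ?_⟩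
      omega
    · intro p hp
      rw [Finset.mem_product, Finset.mem_range, Finset.mem_range] at hp
      rw [Finset.mem_Icc]
      refine ⟨by omega, ?_⟩
      have h1 : 1 + p.1 + c * p.2 ≤ c * (p.2 + 1) := by rw [Nat.mul_succ]; omega
      have h2 : c * (p.2 + 1) ≤ c * m := Nat.mul_le_mul_left c (by omega)
      omega
    · intro a ha
      dsimp only
      rw [Finset.mem_Icc] at ha
      have := Nat.mod_add_div (a - 1) c
      omega
    · intro p hp
      rw [Finset.mem_product, Finset.mem_range, Finset.mem_range] at hp
      have hmod : (1 + p.1 + c * p.2 - 1) % c = p.1 := by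
        rw [show 1 + p.1 + c * p.2 - 1 = p.1 + c * p.2 by omega,
          Nat.add_mul_mod_self_left, Nat.mod_eq_of_lt hp.1]
      have hdiv : (1 + p.1 + c * p.2 - 1) / c = p.2 := by
        rw [show 1 + p.1 + c * p.2 - 1 = p.1 + c * p.2 by omega,
          Nat.add_mul_div_left _ _ hc_pos, Nat.div_eq_of_lt hp.1, Nat.zero_add]
      exact Prod.ext hmod hdiv
    · intro a ha
      dsimp only
      rw [Finset.mem_Icc] at ha
      have hinv : 1 + (a - 1) % c + c * ((a - 1) / c) = a := by
        have := Nat.mod_add_div (a - 1) c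
        omega
      have hcast : (1 : ℂ) + ((a - 1) % c : ℕ) + (c : ℂ) * ((a - 1) / c : ℕ) = (a : ℂ) := by
        exact_mod_cast congrArg (Nat.cast : ℕ → ℂ) hinv
      rw [hinv, hcast]
  rw [step1, Finset.sum_product]
  apply Finset.sum_eq_zero
  intro r hr
  rw [Finset.mem_range] at hr
  have hb2 : 1 + r ≤ k ^ s := by
    have : c ≤ c * m := Nat.le_mul_of_pos_right c hm_pos
    omega
  have hcond : ∀ t, t < m → (ggcd s (1 + r + c * t) (k ^ s) = 1 ↔
      ggcd s (1 + r) (k ^ s) = 1) := by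
    intro t ht
    have hb1 : 1 + r + c * t ≤ k ^ s := by
      have h1 : 1 + r + c * t ≤ c * (t + 1) := by rw [Nat.mul_succ]; omega
      have h2 : c * (t + 1) ≤ c * m := Nat.mul_le_mul_left c (by omega)
      omega
    rw [ggcd_eq_one_iff s hs _ k (by omega) hk hb1,
      ggcd_eq_one_iff s hs _ k (by omega) hk hb2]
    constructor <;> intro H p hp hpk hpa
    · refine H p hp hpk ?_
      have hct : p ^ s ∣ c * t := (hpc p hp hpk).mul_right t
      rw [show 1 + r + c * t = c * t + (1 + r) by omega]
      exact (Nat.dvd_add_right hct).mpr hpa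
    · refine H p hp hpk ?_
      have hct : p ^ s ∣ c * t := (hpc p hp hpk).mul_right t
      rw [show 1 + r + c * t = c * t + (1 + r) by omega] at hpa
      exact (Nat.dvd_add_right hct).mp hpa
  by_cases hC : ggcd s (1 + r) (k ^ s) = 1
  · have hterm : ∀ t ∈ Finset.range m,
        (if ggcd s (1 + r + c * t) (k ^ s) = 1 then
          Complex.exp (2 * Real.pi * Complex.I * n * (1 + r + c * t) / ((k : ℂ) ^ s))
        else 0) =
        Complex.exp (2 * Real.pi * Complex.I * n * (1 + r) / ((k : ℂ) ^ s)) *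
          Complex.exp (2 * Real.pi * Complex.I * n * t / m) := by
      intro t ht
      rw [Finset.mem_range] at ht
      rw [if_pos ((hcond t ht).mpr hC), ← Complex.exp_add]
      congr 1
      push_cast
      rw [hkc]
      field_simp
    rw [Finset.sum_congr rfl hterm, ← Finset.mul_sum,
      sum_exp_eq_zero m n hm_pos h, mul_zero]
  · apply Finset.sum_eq_zero
    intro t ht
    rw [Finset.mem_range] at ht
    rw [if_neg (fun hcc => hC ((hcond t ht).mp hcc))]
end

section
/- Let s ≥ 1 be an integer and let k and n be positive integers. Then the reciprocity relation (μ(k̄)/(k*)^s) · c_k^{(s)}(n^s·(k*)^s) = (μ(n̄)/(n*)^s) · c_n^{(s)}(k^s·(n*)^s) holds, where k̄ (resp. n̄) is the largest squarefree divisor of k (resp. n), k* = k/k̄ and n* = n/n̄, and μ is the Möbius function. -/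
open scoped BigOperators
open ArithmeticFunction
open scoped ArithmeticFunction.Moebius

lemma squarefree_prod_primes {t : Finset ℕ} (ht : ∀ p ∈ t, p.Prime) :
    Squarefree (∏ p ∈ t, p) := by
  induction t using Finset.induction with
  | empty => simpa using squarefree_one
  | insert _ _ hx ih =>
    rename_i a t'
    rw [Finset.prod_insert hx]
    have hp := ht _ (Finset.mem_insert_self a t')
    have ht' : ∀ p ∈ t', p.Prime := fun p hpt => ht p (Finset.mem_insert_of_mem hpt)
    have hcop : Nat.Coprime a (∏ p ∈ t', p) := by
      apply Nat.Coprime.prod_right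
      intro q hq
      exact (Nat.coprime_primes hp (ht' q hq)).mpr (fun h => hx (h ▸ hq))
    exact (Nat.squarefree_mul hcop).mpr ⟨hp.squarefree, ih ht'⟩

lemma core_squarefree (k : ℕ) : Squarefree (core k) :=
  squarefree_prod_primes (fun _ hp => Nat.prime_of_mem_primeFactors hp)

lemma core_dvd (k : ℕ) : core k ∣ k := Nat.prod_primeFactors_dvd k

lemma core_mul_spart {k : ℕ} (hk : k ≠ 0) : core k * spart k = k :=
  Nat.mul_div_cancel' (core_dvd k)

lemma spart_pos {k : ℕ} (hk : k ≠ 0) : 0 < spart k := by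
  rcases Nat.eq_zero_or_pos (spart k) with h | h
  · exact absurd (core_mul_spart hk) (by simp [h]; exact fun e => hk e.symm)
  · exact h

lemma dvd_core_of_squarefree_of_dvd {u n : ℕ} (hu : Squarefree u) (hd : u ∣ n) (hn : n ≠ 0) :
    u ∣ core n := by
  have h1 : u = ∏ p ∈ u.primeFactors, p := (Nat.prod_primeFactors_of_squarefree hu).symm
  have h2 : u.primeFactors ⊆ n.primeFactors := Nat.primeFactors_mono hd hn
  rw [h1]
  exact Finset.prod_dvd_prod_of_subset _ _ _ h2

/-- `part s g = ∏ p^(v_p(g)/s)`, the largest `m` with `m^s ∣ g` (for `g ≠ 0`). -/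
def part (s g : ℕ) : ℕ := ∏ p ∈ g.primeFactors, p ^ (g.factorization p / s)

lemma part_ne_zero (s g : ℕ) : part s g ≠ 0 :=
  Finset.prod_ne_zero_iff.mpr fun p hp =>
    pow_ne_zero _ (Nat.prime_of_mem_primeFactors hp).ne_zero

lemma factorization_part (s g q : ℕ) :
    (part s g).factorization q = g.factorization q / s := by
  unfold part
  rw [Nat.factorization_prod (fun p hp => pow_ne_zero _ (Nat.prime_of_mem_primeFactors hp).ne_zero)]
  rw [Finset.sum_apply']
  have : ∀ p ∈ g.primeFactors,
      ((p ^ (g.factorization p / s)).factorization) q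
        = if p = q then g.factorization p / s else 0 := by
    intro p hp
    rw [(Nat.prime_of_mem_primeFactors hp).factorization_pow, Finsupp.single_apply]
  rw [Finset.sum_congr rfl this, Finset.sum_ite_eq' g.primeFactors q (fun p => g.factorization p / s)]
  by_cases hq : q ∈ g.primeFactors
  · simp [hq]
  · have : g.factorization q = 0 := by
      rw [← Nat.support_factorization] at hq
      exact Finsupp.notMem_support_iff.mp hq
    simp [hq, this]

lemma dvd_part_iff {s g d : ℕ} (hs : s ≠ 0) (hg : g ≠ 0) :
    d ∣ part s g ↔ d ^ s ∣ g := by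
  rcases eq_or_ne d 0 with rfl | hd
  · simp [zero_pow hs, part_ne_zero s g, hg, Nat.zero_dvd]
  rw [← Nat.factorization_le_iff_dvd hd (part_ne_zero s g),
    ← Nat.factorization_le_iff_dvd (pow_ne_zero s hd) hg, Nat.factorization_pow,
    Finsupp.le_def, Finsupp.le_def]
  constructor
  · intro h q
    have := h q
    rw [factorization_part] at this
    have h2 := (Nat.le_div_iff_mul_le (Nat.pos_of_ne_zero hs)).mp this
    rw [Finsupp.smul_apply, smul_eq_mul]
    linarith
  · intro h q
    rw [factorization_part]
    have := h q
    rw [Finsupp.smul_apply, smul_eq_mul] at this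
    exact (Nat.le_div_iff_mul_le (Nat.pos_of_ne_zero hs)).mpr (by linarith [this])

lemma ggcd_eq_part {s h k : ℕ} (hs : s ≠ 0) (hh : h ≠ 0) (hk : k ≠ 0) :
    ggcd s h (k ^ s) = (part s (Nat.gcd h (k ^ s))) ^ s := by
  have hg : Nat.gcd h (k ^ s) ≠ 0 := Nat.gcd_ne_zero_left hh
  set g := Nat.gcd h (k ^ s) with hgdef
  set m := part s g with hmdef
  have hP : ∀ d, (d ^ s ∣ h ∧ d ^ s ∣ k ^ s) ↔ d ∣ m := by
    intro d
    rw [dvd_part_iff hs hg, hgdef, Nat.dvd_gcd_iff]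
  have hm0 : m ≠ 0 := part_ne_zero s g
  unfold ggcd
  congr 1
  rw [Nat.findGreatest_eq_iff]
  have hmle : m ≤ max h (k ^ s) := by
    have h1 : m ^ s ∣ g :=
      Nat.dvd_gcd ((hP m).mpr dvd_rfl).1 ((hP m).mpr dvd_rfl).2
    have h2 : m ≤ m ^ s := Nat.le_self_pow hs m
    have h3 : m ^ s ≤ g := Nat.le_of_dvd (Nat.pos_of_ne_zero hg) h1
    have h4 : g ≤ h := Nat.le_of_dvd (Nat.pos_of_ne_zero hh) (Nat.gcd_dvd_left _ _)
    exact le_max_of_le_left (le_trans h2 (le_trans h3 h4))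
  refine ⟨hmle, fun _ => (hP m).mpr dvd_rfl, fun n hn hnle hPn => ?_⟩
  exact absurd (Nat.le_of_dvd (Nat.pos_of_ne_zero hm0) ((hP n).mp hPn)) (not_le.mpr hn)

lemma sum_moebius_divisors (m : ℕ) :
    ∑ d ∈ m.divisors, μ d = if m = 1 then 1 else 0 := by
  have h := ArithmeticFunction.coe_mul_zeta_apply (R := ℤ) (f := (μ : ArithmeticFunction ℤ)) (x := m)
  rw [ArithmeticFunction.moebius_mul_coe_zeta] at h
  rw [← h, ArithmeticFunction.one_apply]

open Real Complex in
lemma sum_exp_div (M N : ℕ) (hM : M ≠ 0) :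
    ∑ j ∈ Finset.Icc 1 M, Complex.exp (2 * π * I * N * j / M)
      = if M ∣ N then (M : ℂ) else 0 := by
  have hM' : (M : ℂ) ≠ 0 := Nat.cast_ne_zero.mpr hM
  have hfval : ∀ j : ℕ, Complex.exp (2 * π * I * N * j / M)
      = Complex.exp (2 * π * I * N / M) ^ j := by
    intro j
    rw [← Complex.exp_nat_mul]
    congr 1
    ring
  have hfM : Complex.exp (2 * π * I * N / M) ^ M = 1 := by
    rw [← Complex.exp_nat_mul]
    have h1 : (M : ℂ) * (2 * π * I * N / M) = (N : ℂ) * (2 * π * I) := by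
      rw [mul_div_assoc', mul_comm ((M:ℂ)), mul_div_assoc, div_self hM', mul_one]
      ring
    rw [h1]
    exact_mod_cast Complex.exp_nat_mul_two_pi_mul_I N
  simp only [hfval]
  have hshift : ∑ j ∈ Finset.Icc 1 M, Complex.exp (2 * π * I * N / M) ^ j
      = ∑ j ∈ Finset.range M, Complex.exp (2 * π * I * N / M) ^ j := by
    set z := Complex.exp (2 * π * I * N / M)
    have h1 : ∑ j ∈ Finset.range (M + 1), z ^ j = z ^ 0 + ∑ j ∈ Finset.Icc 1 M, z ^ j := by
      rw [Finset.sum_range_succ', ← Finset.Ico_add_one_right_eq_Icc, Finset.sum_Ico_eq_sum_range]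
      rw [add_comm]
      congr 1
      exact Finset.sum_congr rfl fun i _ => by rw [add_comm 1 i]
    have h2 : ∑ j ∈ Finset.range (M + 1), z ^ j = ∑ j ∈ Finset.range M, z ^ j + z ^ M := by
      rw [Finset.sum_range_succ]
    rw [pow_zero] at h1; rw [hfM] at h2
    linear_combination h2 - h1
  rw [hshift]
  by_cases hdvd : M ∣ N
  · obtain ⟨t, ht⟩ := hdvd
    have hz : Complex.exp (2 * π * I * N / M) = 1 := by
      have h1 : (2 : ℂ) * π * I * N / M = (t : ℂ) * (2 * π * I) := by
        rw [ht]; push_cast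
        rw [show (2:ℂ) * π * I * ((M:ℂ) * (t:ℂ)) = ((t:ℂ) * (2 * π * I)) * (M:ℂ) by ring,
          mul_div_cancel_right₀ _ hM']
      rw [h1]
      exact_mod_cast Complex.exp_nat_mul_two_pi_mul_I t
    rw [hz]
    simp [ht, Dvd.intro t rfl]
  · rw [if_neg hdvd]
    have hz1 : Complex.exp (2 * π * I * N / M) ≠ 1 := by
      intro hone
      obtain ⟨t, htt⟩ := Complex.exp_eq_one_iff.mp hone
      have hpi : (2 : ℂ) * π * I ≠ 0 := by
        simp [Complex.I_ne_zero, Real.pi_ne_zero, Complex.ofReal_ne_zero]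
      have hNc : (N : ℂ) = t * M := by
        have h2 : (2 : ℂ) * π * I * N = t * (2 * π * I) * M := by
          rw [← htt, div_mul_cancel₀ _ hM']
        have h3 : (2 : ℂ) * π * I * N = 2 * π * I * (t * M) := by rw [h2]; ring
        exact mul_left_cancel₀ hpi h3
      have hNt : (N : ℤ) = t * M := by exact_mod_cast hNc
      exact hdvd (Int.natCast_dvd_natCast.mp ⟨t, by rw [hNt]; ring⟩)
    rw [geom_sum_eq hz1, hfM]
    simp

lemma indicator_eq {s k h : ℕ} (hs : s ≠ 0) (hk : k ≠ 0) (hh : h ≠ 0) :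
    (if ggcd s h (k ^ s) = 1 then (1 : ℂ) else 0)
      = ∑ d ∈ k.divisors, if d ^ s ∣ h then (μ d : ℂ) else 0 := by
  have hg : Nat.gcd h (k ^ s) ≠ 0 := Nat.gcd_ne_zero_left hh
  have hm0 : part s (Nat.gcd h (k ^ s)) ≠ 0 := part_ne_zero _ _
  have hset : k.divisors.filter (fun d => d ^ s ∣ h)
      = (part s (Nat.gcd h (k ^ s))).divisors := by
    ext d
    simp only [Finset.mem_filter, Nat.mem_divisors]
    constructor
    · rintro ⟨⟨hdk, _⟩, hdh⟩
      refine ⟨(dvd_part_iff hs hg).mpr (Nat.dvd_gcd hdh (pow_dvd_pow_of_dvd hdk s)), hm0⟩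
    · rintro ⟨hdm, _⟩
      have h2 := (dvd_part_iff hs hg).mp hdm
      have h3 : d ^ s ∣ h := h2.trans (Nat.gcd_dvd_left _ _)
      have h4 : d ^ s ∣ k ^ s := h2.trans (Nat.gcd_dvd_right _ _)
      exact ⟨⟨(Nat.pow_dvd_pow_iff hs).mp h4, hk⟩, h3⟩
  rw [Finset.sum_ite, Finset.sum_const_zero, add_zero, hset]
  have : ∑ d ∈ (part s (Nat.gcd h (k ^ s))).divisors, (μ d : ℂ)
      = ((∑ d ∈ (part s (Nat.gcd h (k ^ s))).divisors, μ d : ℤ) : ℂ) := by push_cast; rfl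
  rw [this, sum_moebius_divisors]
  rw [ggcd_eq_part hs hh hk]
  have hiff : (part s (Nat.gcd h (k ^ s))) ^ s = 1 ↔ part s (Nat.gcd h (k ^ s)) = 1 := by
    constructor
    · intro hx
      exact Nat.dvd_one.mp (hx ▸ dvd_pow_self _ hs)
    · intro hx; rw [hx, one_pow]
  by_cases h1 : part s (Nat.gcd h (k ^ s)) = 1 <;> simp [h1, hiff, hs]

open Real Complex in
lemma CRS_eq (s k : ℕ) (hs : s ≠ 0) (hk : k ≠ 0) (N : ℕ) :
    CRS s k N = ∑ d ∈ k.divisors,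
      (μ d : ℂ) * (if (k / d) ^ s ∣ N then (((k / d : ℕ)) : ℂ) ^ s else 0) := by
  unfold CRS
  have hks : (k : ℂ) ^ s ≠ 0 := pow_ne_zero _ (Nat.cast_ne_zero.mpr hk)
  calc ∑ h ∈ Finset.Icc 1 (k ^ s), (if ggcd s h (k ^ s) = 1 then
        Complex.exp (2 * π * I * N * h / (k ^ s)) else 0)
      = ∑ h ∈ Finset.Icc 1 (k ^ s), ∑ d ∈ k.divisors,
          (if d ^ s ∣ h then (μ d : ℂ) else 0) * Complex.exp (2 * π * I * N * h / (k ^ s)) := by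
        refine Finset.sum_congr rfl fun h hh => ?_
        have hh0 : h ≠ 0 := by
          rcases Finset.mem_Icc.mp hh with ⟨h1, _⟩; omega
        rw [← Finset.sum_mul, ← indicator_eq hs hk hh0]
        by_cases hcond : ggcd s h (k ^ s) = 1 <;> simp [hcond]
    _ = ∑ d ∈ k.divisors, ∑ h ∈ Finset.Icc 1 (k ^ s),
          (if d ^ s ∣ h then (μ d : ℂ) else 0) * Complex.exp (2 * π * I * N * h / (k ^ s)) :=
        Finset.sum_comm
    _ = ∑ d ∈ k.divisors,
          (μ d : ℂ) * (if (k / d) ^ s ∣ N then (((k / d : ℕ)) : ℂ) ^ s else 0) := by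
        refine Finset.sum_congr rfl fun d hd => ?_
        obtain ⟨hdk, _⟩ := Nat.mem_divisors.mp hd
        obtain ⟨e, he⟩ := hdk
        have hd0 : d ≠ 0 := by rintro rfl; exact hk (by simpa using he)
        have he0 : e ≠ 0 := by rintro rfl; exact hk (by simpa using he)
        have hkd : k / d = e := by rw [he]; exact Nat.mul_div_cancel_left e (Nat.pos_of_ne_zero hd0)
        rw [hkd]
        have hsplit : ∑ h ∈ Finset.Icc 1 (k ^ s),
            (if d ^ s ∣ h then (μ d : ℂ) else 0) * Complex.exp (2 * π * I * N * h / (k ^ s))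
            = (μ d : ℂ) * ∑ h ∈ (Finset.Icc 1 (k ^ s)).filter (fun h => d ^ s ∣ h),
                Complex.exp (2 * π * I * N * h / (k ^ s)) := by
          rw [Finset.mul_sum, ← Finset.sum_filter_of_ne (p := fun h => d ^ s ∣ h)]
          · exact Finset.sum_congr rfl fun h hh => by
              rw [if_pos (Finset.mem_filter.mp hh).2]
          · intro h _ hne
            by_contra hnd
            exact hne (by simp [hnd])
        rw [hsplit]
        congr 1
        -- inner sum: reindex h = d^s * j
        have hke : (k : ℂ) ^ s = (d : ℂ) ^ s * (e : ℂ) ^ s := by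
          rw [he]; push_cast; ring
        have hd0' : ((d : ℂ)) ^ s ≠ 0 := pow_ne_zero _ (Nat.cast_ne_zero.mpr hd0)
        have he0' : ((e : ℂ)) ^ s ≠ 0 := pow_ne_zero _ (Nat.cast_ne_zero.mpr he0)
        have hbij : ∑ h ∈ (Finset.Icc 1 (k ^ s)).filter (fun h => d ^ s ∣ h),
            Complex.exp (2 * π * I * N * h / (k ^ s))
            = ∑ j ∈ Finset.Icc 1 (e ^ s), Complex.exp (2 * π * I * N * j / ((e ^ s : ℕ))) := by
          refine Finset.sum_nbij' (fun h => h / d ^ s) (fun j => d ^ s * j) ?_ ?_ ?_ ?_ ?_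
          · intro h hh
            obtain ⟨hh1, hdvd⟩ := Finset.mem_filter.mp hh
            obtain ⟨h1, h2⟩ := Finset.mem_Icc.mp hh1
            refine Finset.mem_Icc.mpr ⟨?_, ?_⟩
            · exact Nat.div_pos (Nat.le_of_dvd (by omega) hdvd) (by positivity)
            · rw [he, mul_pow] at h2
              exact Nat.div_le_of_le_mul h2
          · intro j hj
            obtain ⟨h1, h2⟩ := Finset.mem_Icc.mp hj
            refine Finset.mem_filter.mpr ⟨Finset.mem_Icc.mpr ⟨?_, ?_⟩, Dvd.intro j rfl⟩
            · have : 0 < d ^ s := by positivity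
              nlinarith
            · rw [he, mul_pow]
              exact Nat.mul_le_mul_left _ h2
          · intro h hh
            exact Nat.mul_div_cancel' (Finset.mem_filter.mp hh).2
          · intro j hj
            exact Nat.mul_div_cancel_left j (by positivity)
          · intro h hh
            obtain ⟨_, hdvd⟩ := Finset.mem_filter.mp hh
            obtain ⟨j, hjeq⟩ := hdvd
            subst hjeq
            simp only [Nat.mul_div_cancel_left j (show 0 < d ^ s by positivity)]
            congr 1
            push_cast
            rw [hke]
            field_simp
        rw [hbij, sum_exp_div (e ^ s) N (by positivity)]
        by_cases hc : e ^ s ∣ N <;> simp [hc]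

lemma moebius_div_mul {c u : ℕ} (hc : Squarefree c) (hu : u ∣ c) :
    (μ c) * (μ (c / u)) = μ u := by
  obtain ⟨v, rfl⟩ := hu
  have hu0 : u ≠ 0 := by rintro rfl; exact hc.ne_zero (by simp)
  have hv : u * v / u = v := Nat.mul_div_cancel_left v (Nat.pos_of_ne_zero hu0)
  rw [hv]
  have hcop : Nat.Coprime u v := Nat.coprime_of_squarefree_mul hc
  rw [isMultiplicative_moebius.map_mul_of_coprime hcop]
  have hvsq : Squarefree v := hc.squarefree_of_dvd (Dvd.intro_left u rfl)
  have : μ v * μ v = 1 := by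
    have := moebius_sq_eq_one_of_squarefree hvsq
    rwa [pow_two] at this
  rw [mul_assoc, this, mul_one]

lemma half (s : ℕ) (hs : s ≠ 0) (k n : ℕ) (hk : k ≠ 0) (hn : n ≠ 0) :
    ((μ (core k) : ℂ) / (spart k : ℂ) ^ s) * CRS s k (n ^ s * (spart k) ^ s)
      = ∑ u ∈ (Nat.gcd (core k) (core n)).divisors, (μ u : ℂ) * (u : ℂ) ^ s := by
  have hsp0 : (spart k : ℂ) ≠ 0 := Nat.cast_ne_zero.mpr (spart_pos hk).ne'
  have hsps : (spart k : ℂ) ^ s ≠ 0 := pow_ne_zero _ hsp0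
  have hc0 : core k ≠ 0 := (core_squarefree k).ne_zero
  rw [CRS_eq s k hs hk]
  -- replace divisibility condition
  have hN : n ^ s * spart k ^ s = (n * spart k) ^ s := (mul_pow n (spart k) s).symm
  -- restrict to divisors of core k
  have hsubset : (core k).divisors ⊆ k.divisors := Nat.divisors_subset_of_dvd hk (core_dvd k)
  rw [Finset.mul_sum]
  rw [← Finset.sum_subset hsubset ?vanish]
  case vanish =>
    intro d hd hnd
    have : ¬ Squarefree d := by
      intro hsq
      exact hnd (Nat.mem_divisors.mpr
        ⟨dvd_core_of_squarefree_of_dvd hsq (Nat.dvd_of_mem_divisors hd) hk, hc0⟩)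
    rw [moebius_eq_zero_of_not_squarefree this]
    simp
  -- now over (core k).divisors
  have step1 : ∀ d ∈ (core k).divisors,
      ((μ (core k) : ℂ) / (spart k : ℂ) ^ s) *
        ((μ d : ℂ) * (if (k / d) ^ s ∣ n ^ s * spart k ^ s then (((k / d : ℕ)) : ℂ) ^ s else 0))
      = (μ (core k) : ℂ) * (μ d : ℂ) *
          (if (core k / d) ∣ n then (((core k / d : ℕ)) : ℂ) ^ s else 0) := by
    intro d hd
    obtain ⟨hdc, -⟩ := Nat.mem_divisors.mp hd
    obtain ⟨c, hc⟩ := hdc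
    have hd0 : d ≠ 0 := by rintro rfl; exact hc0 (by simpa using hc)
    have hcd : core k / d = c := by rw [hc]; exact Nat.mul_div_cancel_left c (Nat.pos_of_ne_zero hd0)
    have hkd : k / d = c * spart k := by
      have heq : k = d * (c * spart k) := by
        rw [← mul_assoc, ← hc]; exact (core_mul_spart hk).symm
      conv_lhs => rw [heq]
      exact Nat.mul_div_cancel_left _ (Nat.pos_of_ne_zero hd0)
    rw [hkd, hcd]
    have hcond2 : ((c * spart k) ^ s ∣ n ^ s * spart k ^ s) ↔ (c ∣ n) := by
      rw [hN, Nat.pow_dvd_pow_iff hs, Nat.mul_dvd_mul_iff_right (spart_pos hk)]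
    by_cases hcn : c ∣ n
    · rw [if_pos (hcond2.mpr hcn), if_pos hcn]
      push_cast
      field_simp
      ring
    · rw [if_neg (fun hx => hcn (hcond2.mp hx)), if_neg hcn]
      simp
  rw [Finset.sum_congr rfl step1]
  -- reindex d ↦ core k / d
  have step2 : ∑ d ∈ (core k).divisors, (μ (core k) : ℂ) * (μ d : ℂ) *
        (if (core k / d) ∣ n then (((core k / d : ℕ)) : ℂ) ^ s else 0)
      = ∑ u ∈ (core k).divisors, (μ (core k) : ℂ) * (μ (core k / u) : ℂ) *
        (if u ∣ n then ((u : ℕ) : ℂ) ^ s else 0) := by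
    rw [← Nat.sum_div_divisors (core k)
      (fun u => (μ (core k) : ℂ) * (μ (core k / u) : ℂ) * (if u ∣ n then ((u : ℕ) : ℂ) ^ s else 0))]
    refine Finset.sum_congr rfl fun d hd => ?_
    obtain ⟨hdc, -⟩ := Nat.mem_divisors.mp hd
    rw [Nat.div_div_self hdc hc0]
  rw [step2]
  have step3 : ∀ u ∈ (core k).divisors,
      (μ (core k) : ℂ) * (μ (core k / u) : ℂ) * (if u ∣ n then ((u : ℕ) : ℂ) ^ s else 0)
      = if u ∣ n then (μ u : ℂ) * (u : ℂ) ^ s else 0 := by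
    intro u hu
    obtain ⟨huc, -⟩ := Nat.mem_divisors.mp hu
    have : (μ (core k) : ℂ) * (μ (core k / u) : ℂ) = (μ u : ℂ) := by
      rw [← Int.cast_mul, moebius_div_mul (core_squarefree k) huc]
    rw [this]
    by_cases hun : u ∣ n <;> simp [hun]
  rw [Finset.sum_congr rfl step3]
  -- identify the filtered set with divisors of the gcd
  rw [Finset.sum_ite, Finset.sum_const_zero, add_zero]
  refine Finset.sum_congr ?_ (fun _ _ => rfl)
  ext u
  simp only [Finset.mem_filter, Nat.mem_divisors]
  constructor
  · rintro ⟨⟨huc, -⟩, hun⟩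
    have husq : Squarefree u := (core_squarefree k).squarefree_of_dvd huc
    exact ⟨Nat.dvd_gcd huc (dvd_core_of_squarefree_of_dvd husq hun hn),
      Nat.gcd_ne_zero_left hc0⟩
  · rintro ⟨hug, -⟩
    exact ⟨⟨hug.trans (Nat.gcd_dvd_left _ _), hc0⟩,
      (hug.trans (Nat.gcd_dvd_right _ _)).trans (core_dvd n)⟩

/-- Reciprocity theorem:
`(μ(k̄)/(k*)^s)·c_k^{(s)}(n^s·(k*)^s) = (μ(n̄)/(n*)^s)·c_n^{(s)}(k^s·(n*)^s)`. -/
theorem CRS_reciprocity (s : ℕ) (hs : 1 ≤ s) (k n : ℕ) (hk : 0 < k) (hn : 0 < n) :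
    ((μ (core k) : ℂ) / (spart k : ℂ) ^ s) * CRS s k (n ^ s * (spart k) ^ s) =
      ((μ (core n) : ℂ) / (spart n : ℂ) ^ s) * CRS s n (k ^ s * (spart n) ^ s) := by
  have hs' : s ≠ 0 := by omega
  rw [half s hs' k n hk.ne' hn.ne', half s hs' n k hn.ne' hk.ne', Nat.gcd_comm]
end
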